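/- Let (E,𝓔) be a countably generated measurable space, let μ be an atomless σ-finite measure on it, let Q(x,dy) = q(x,y)μ(dy) be a μ-reversible Markov kernel with jointly measurable density q, and let Π(dx) = π(x)μ(dx) be a probability measure whose density satisfies μ-ess sup π = +∞. Then the Metropolis kernel P with proposal Q and acceptance probability α(x,y) = min{1, π(y)/π(x)} is not uniformly ergodic; that is, it is NOT the case that sup_{x∈E} sup_{A∈𝓔} |P^m(x,A) − Π(A)| → 0 as m → ∞. -/

import Mathlib

open MeasureTheory ProbabilityTheory
open scoped ENNReal

/-- The `m`-fold composition of a Markov kernel (`kiter P 0` is the identity kernel). -/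
noncomputable def kiter {E : Type*} [MeasurableSpace E] (P : Kernel E E) : ℕ → Kernel E E
  | 0 => Kernel.id
  | n + 1 => P ∘ₖ kiter P n

section Aux

variable {E : Type*} [MeasurableSpace E]

lemma metropolis_univ (Q : Kernel E E) [IsMarkovKernel Q] (π : E → ℝ≥0∞) (P : Kernel E E)
    (hP : ∀ (x : E) (A : Set E), MeasurableSet A →
      P x A = Measure.dirac x A * (1 - ∫⁻ y, min 1 (π y / π x) ∂(Q x))
        + ∫⁻ y in A, min 1 (π y / π x) ∂(Q x)) :
    ∀ x, P x Set.univ = 1 := by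
  intro x
  have hs : (∫⁻ y, min 1 (π y / π x) ∂(Q x)) ≤ 1 := by
    calc (∫⁻ y, min 1 (π y / π x) ∂(Q x)) ≤ ∫⁻ _, 1 ∂(Q x) :=
          lintegral_mono fun y => min_le_left _ _
      _ = 1 := by simp
  rw [hP x Set.univ MeasurableSet.univ, setLIntegral_univ, Measure.dirac_apply_of_mem
    (Set.mem_univ x), one_mul, tsub_add_cancel_of_le hs]

lemma kiter_univ (Q : Kernel E E) [IsMarkovKernel Q] (π : E → ℝ≥0∞) (P : Kernel E E)
    (hP : ∀ (x : E) (A : Set E), MeasurableSet A →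
      P x A = Measure.dirac x A * (1 - ∫⁻ y, min 1 (π y / π x) ∂(Q x))
        + ∫⁻ y in A, min 1 (π y / π x) ∂(Q x)) :
    ∀ m x, kiter P m x Set.univ = 1 := by
  intro m
  induction m with
  | zero =>
      intro x
      simp [kiter, Kernel.id, Kernel.deterministic_apply]
  | succ n ih =>
      intro x
      rw [show kiter P (n+1) = P ∘ₖ kiter P n from rfl,
        Kernel.comp_apply' _ _ _ MeasurableSet.univ]
      calc (∫⁻ y, P y Set.univ ∂(kiter P n x)) = ∫⁻ _, 1 ∂(kiter P n x) := by
            refine lintegral_congr fun y => metropolis_univ Q π P hP y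
        _ = kiter P n x Set.univ := by simp
        _ = 1 := ih x

/-- One-step descent bound: from a point of height at least `c * R`, the probability of landing
below height `c` in one Metropolis step is at most `1 / R`. -/
lemma metropolis_descent_one (Q : Kernel E E) [IsMarkovKernel Q]
    (π : E → ℝ≥0∞) (hπ_meas : Measurable π) (P : Kernel E E)
    (hP : ∀ (x : E) (A : Set E), MeasurableSet A →
      P x A = Measure.dirac x A * (1 - ∫⁻ y, min 1 (π y / π x) ∂(Q x))
        + ∫⁻ y in A, min 1 (π y / π x) ∂(Q x))
    (c R : ℝ≥0∞) (hc : c ≠ 0) (hc' : c ≠ ⊤) (hR : 1 ≤ R)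
    (y : E) (hy : c * R ≤ π y) :
    P y {z | π z < c} ≤ 1 / R := by
  have hA : MeasurableSet {z | π z < c} := hπ_meas measurableSet_Iio
  have hynot : y ∉ {z | π z < c} := by
    simp only [Set.mem_setOf_eq, not_lt]
    calc c = c * 1 := (mul_one c).symm
      _ ≤ c * R := mul_le_mul_right hR c
      _ ≤ π y := hy
  have hdirac : Measure.dirac y {z | π z < c} = 0 := by
    rw [Measure.dirac_apply' _ hA, Set.indicator_of_notMem hynot]
  rw [hP y _ hA, hdirac, zero_mul, zero_add]
  calc (∫⁻ z in {z | π z < c}, min 1 (π z / π y) ∂(Q y))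
      ≤ ∫⁻ _ in {z | π z < c}, 1 / R ∂(Q y) := by
        refine setLIntegral_mono' hA fun z hz => ?_
        have h1 : π z / π y ≤ c / (c * R) := ENNReal.div_le_div (le_of_lt hz) hy
        have h2 : c / (c * R) = 1 / R := by
          rw [show c / (c * R) = c * 1 / (c * R) by rw [mul_one],
            ENNReal.mul_div_mul_left 1 R hc hc']
        exact le_trans (min_le_right _ _) (h1.trans_eq h2)
    _ = 1 / R * Q y {z | π z < c} := by rw [setLIntegral_const]
    _ ≤ 1 / R * 1 := by
        exact mul_le_mul_right (le_trans (measure_mono (Set.subset_univ _)) (by simp)) _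
    _ = 1 / R := mul_one _

/-- Multi-step descent bound. -/
lemma metropolis_descent (Q : Kernel E E) [IsMarkovKernel Q]
    (π : E → ℝ≥0∞) (hπ_meas : Measurable π) (P : Kernel E E)
    (hP : ∀ (x : E) (A : Set E), MeasurableSet A →
      P x A = Measure.dirac x A * (1 - ∫⁻ y, min 1 (π y / π x) ∂(Q x))
        + ∫⁻ y in A, min 1 (π y / π x) ∂(Q x))
    (R : ℝ≥0∞) (hR : 1 ≤ R) (hR' : R ≠ ⊤) :
    ∀ (m : ℕ) (c : ℝ≥0∞), c ≠ 0 → c ≠ ⊤ → ∀ x, c * R ^ m ≤ π x →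
      kiter P m x {z | π z < c} ≤ m / R := by
  have hR0 : R ≠ 0 := fun h => by simp [h] at hR
  intro m
  induction m with
  | zero =>
      intro c hc hc' x hx
      have hA : MeasurableSet {z | π z < c} := hπ_meas measurableSet_Iio
      have hxnot : x ∉ {z | π z < c} := by
        simp only [Set.mem_setOf_eq, not_lt]
        calc c = c * R ^ 0 := by simp
          _ ≤ π x := hx
      have : kiter P 0 x {z | π z < c} = 0 := by
        show Kernel.id x {z | π z < c} = 0
        rw [Kernel.id, Kernel.deterministic_apply, id_eq, Measure.dirac_apply' _ hA,
          Set.indicator_of_notMem hxnot]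
      rw [this]
      exact zero_le
  | succ n ih =>
      intro c hc hc' x hx
      have hcR : c * R ≠ 0 := mul_ne_zero hc hR0
      have hcR' : c * R ≠ ⊤ := ENNReal.mul_ne_top hc' hR'
      have hx' : (c * R) * R ^ n ≤ π x := by
        calc (c * R) * R ^ n = c * R ^ (n + 1) := by ring
          _ ≤ π x := hx
      have ihx := ih (c * R) hcR hcR' x hx'
      have hA : MeasurableSet {z | π z < c} := hπ_meas measurableSet_Iio
      have hB : MeasurableSet {z | π z < c * R} := hπ_meas measurableSet_Iio
      rw [show kiter P (n+1) = P ∘ₖ kiter P n from rfl, Kernel.comp_apply' _ _ _ hA]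
      calc (∫⁻ y, P y {z | π z < c} ∂(kiter P n x))
          ≤ ∫⁻ y, ({z | π z < c * R}.indicator (fun _ => (1 : ℝ≥0∞)) y + 1 / R)
              ∂(kiter P n x) := by
            refine lintegral_mono fun y => ?_
            by_cases hy : y ∈ {z | π z < c * R}
            · have h1 : P y {z | π z < c} ≤ 1 := by
                refine le_trans (measure_mono (Set.subset_univ _)) ?_
                rw [metropolis_univ Q π P hP y]
              have hind : {z | π z < c * R}.indicator (fun _ => (1 : ℝ≥0∞)) y = 1 :=
                Set.indicator_of_mem hy _
              calc P y {z | π z < c} ≤ 1 := h1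
                _ ≤ {z | π z < c * R}.indicator (fun _ => (1 : ℝ≥0∞)) y + 1 / R := by
                    rw [hind]; exact le_self_add
            · have h1 : P y {z | π z < c} ≤ 1 / R :=
                metropolis_descent_one Q π hπ_meas P hP c R hc hc' hR y
                  (not_lt.mp (by simpa using hy))
              calc P y {z | π z < c} ≤ 1 / R := h1
                _ ≤ _ := le_add_self
        _ = kiter P n x {z | π z < c * R} + 1 / R * kiter P n x Set.univ := by
            rw [lintegral_add_right _ measurable_const, lintegral_const]
            congr 1
            have : ({z | π z < c * R}.indicator (fun _ => (1 : ℝ≥0∞)))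
                = {z | π z < c * R}.indicator (1 : E → ℝ≥0∞) := rfl
            rw [this, lintegral_indicator_one hB]
        _ ≤ n / R + 1 / R := by
            rw [kiter_univ Q π P hP n x, mul_one]
            exact add_le_add_left ihx _
        _ = (n + 1 : ℕ) / R := by
            rw [ENNReal.div_add_div_same]
            norm_cast

end Aux

/-- If the target density `π` with respect to the reference measure `μ` satisfies
`μ-ess sup π = +∞`, then the Metropolis kernel `P` with a `μ`-reversible proposal kernel
`Q(x,dy) = q(x,y)μ(dy)` is not uniformly ergodic: it is not the case that
`sup_x sup_A |P^m(x,A) − Π(A)| → 0` as `m → ∞`. -/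
theorem stmt_0 {E : Type*} [MeasurableSpace E] [MeasurableSpace.CountablyGenerated E]
    (μ : Measure E) [SigmaFinite μ] [NullSingletonClass μ]
    (Q : Kernel E E) [IsMarkovKernel Q]
    (q : E → E → ℝ≥0∞) (hq_meas : Measurable (Function.uncurry q))
    (hQq : ∀ x : E, (Q x : Measure E) = μ.withDensity (q x))
    (hQrev : ∀ A B : Set E, MeasurableSet A → MeasurableSet B →
      ∫⁻ x in A, Q x B ∂μ = ∫⁻ x in B, Q x A ∂μ)
    (π : E → ℝ≥0∞) (hπ_meas : Measurable π)
    (Ppi : Measure E) (hPpi : Ppi = μ.withDensity π) [IsProbabilityMeasure Ppi]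
    (hess : essSup π μ = ⊤)
    (P : Kernel E E)
    (hP : ∀ (x : E) (A : Set E), MeasurableSet A →
      P x A = Measure.dirac x A * (1 - ∫⁻ y, min 1 (π y / π x) ∂(Q x))
        + ∫⁻ y in A, min 1 (π y / π x) ∂(Q x)) :
    ¬ (∀ ε : ℝ, 0 < ε → ∃ N : ℕ, ∀ m ≥ N, ∀ (x : E) (A : Set E), MeasurableSet A →
        |((kiter P m) x A).toReal - (Ppi A).toReal| ≤ ε) := by
  intro H
  -- the set where π is infinite is μ-null
  have htop_meas : MeasurableSet {x | π x = ⊤} := hπ_meas (measurableSet_singleton ⊤)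
  have hmu_top : μ {x | π x = ⊤} = 0 := by
    by_contra h
    have : Ppi {x | π x = ⊤} = ⊤ := by
      rw [hPpi, withDensity_apply _ htop_meas]
      calc (∫⁻ x in {x | π x = ⊤}, π x ∂μ) = ∫⁻ _ in {x | π x = ⊤}, ⊤ ∂μ :=
            setLIntegral_congr_fun htop_meas (fun x hx => hx)
        _ = ⊤ * μ {x | π x = ⊤} := setLIntegral_const _ _
        _ = ⊤ := ENNReal.top_mul h
    exact (measure_lt_top Ppi _).ne this
  have hPpi_top : Ppi {x | π x = ⊤} = 0 := by
    rw [hPpi]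
    exact (withDensity_absolutelyContinuous μ π) hmu_top
  -- find a finite level c with Ppi {π ≥ c} < 1/4
  set Bn : ℕ → Set E := fun n => {x | (n : ℝ≥0∞) ≤ π x} with hBn
  have hBn_meas : ∀ n, MeasurableSet (Bn n) := fun n => hπ_meas measurableSet_Ici
  have hBn_anti : Antitone Bn := by
    intro a b hab x hx
    exact le_trans (show ((a : ℕ) : ℝ≥0∞) ≤ ((b : ℕ) : ℝ≥0∞) by exact_mod_cast hab) hx
  have hBn_inter : ⋂ n, Bn n = {x | π x = ⊤} := by
    ext x
    simp only [Set.mem_iInter, hBn, Set.mem_setOf_eq]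
    constructor
    · intro h
      by_contra hne
      obtain ⟨n, hn⟩ := ENNReal.exists_nat_gt hne
      exact absurd (h n) (not_le.mpr hn)
    · intro h n; rw [h]; exact le_top
  have htend : Filter.Tendsto (fun n => Ppi (Bn n)) Filter.atTop (nhds 0) := by
    have := tendsto_measure_iInter_atTop (μ := Ppi)
      (fun n => (hBn_meas n).nullMeasurableSet) hBn_anti ⟨0, measure_ne_top _ _⟩
    rwa [hBn_inter, hPpi_top] at this
  obtain ⟨n₀, hn₀⟩ : ∃ n, Ppi (Bn n) < 1/4 := by
    have := htend.eventually (gt_mem_nhds (by norm_num : (0 : ℝ≥0∞) < 1/4))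
    exact this.exists
  set c : ℝ≥0∞ := ((n₀ + 1 : ℕ) : ℝ≥0∞) with hc_def
  have hc0 : c ≠ 0 := by positivity
  have hc' : c ≠ ⊤ := ENNReal.natCast_ne_top _
  set L : Set E := {z | π z < c} with hL_def
  have hL_meas : MeasurableSet L := hπ_meas measurableSet_Iio
  have hLB : Lᶜ ⊆ Bn n₀ := by
    intro x hx
    simp only [hL_def, Set.mem_compl_iff, Set.mem_setOf_eq, not_lt] at hx
    simp only [hBn, Set.mem_setOf_eq]
    refine le_trans ?_ hx
    rw [hc_def]
    exact_mod_cast Nat.cast_le.mpr (Nat.le_succ n₀)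
  have hPL : (3/4 : ℝ) ≤ (Ppi L).toReal := by
    have h1 : Ppi Lᶜ < 1/4 := lt_of_le_of_lt (measure_mono hLB) hn₀
    have h2 : Ppi L + Ppi Lᶜ = 1 := by
      rw [measure_add_measure_compl hL_meas, measure_univ]
    have h3 : (Ppi L).toReal + (Ppi Lᶜ).toReal = 1 := by
      rw [← ENNReal.toReal_add (measure_ne_top _ _) (measure_ne_top _ _), h2]
      simp
    have h14 : ((1 : ℝ≥0∞)/4).toReal = (1/4 : ℝ) := by
      rw [ENNReal.toReal_div]; norm_num
    have h4 : (Ppi Lᶜ).toReal < (1/4 : ℝ) := by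
      rw [← h14]
      exact (ENNReal.toReal_lt_toReal (measure_ne_top _ _) (by norm_num)).mpr h1
    linarith
  -- apply uniform ergodicity with ε = 1/4
  obtain ⟨N, hN⟩ := H (1/4) (by norm_num)
  have hN' := hN N le_rfl
  -- choose R and a high starting point x
  set R : ℝ≥0∞ := ((4 * (N + 1) : ℕ) : ℝ≥0∞) with hR_def
  have hR1 : 1 ≤ R := by
    rw [hR_def]
    exact_mod_cast Nat.one_le_iff_ne_zero.mpr (by omega)
  have hR' : R ≠ ⊤ := ENNReal.natCast_ne_top _
  obtain ⟨x, hx⟩ : ∃ x, c * R ^ N ≤ π x := by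
    by_contra h
    push_neg at h
    have : essSup π μ ≤ c * R ^ N :=
      essSup_le_of_ae_le _ (Filter.Eventually.of_forall fun x => (h x).le)
    rw [hess] at this
    have hfin : c * R ^ N ≠ ⊤ :=
      ENNReal.mul_ne_top hc' (ENNReal.pow_ne_top hR')
    exact hfin (top_le_iff.mp this)
  -- descent bound
  have hdesc : kiter P N x L ≤ (N : ℝ≥0∞) / R :=
    metropolis_descent Q π hπ_meas P hP R hR1 hR' N c hc0 hc' x hx
  have hfinP : kiter P N x L ≠ ⊤ := by
    have hle : kiter P N x L ≤ 1 := by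
      refine le_trans (measure_mono (Set.subset_univ _)) ?_
      rw [kiter_univ Q π P hP N x]
    exact ne_top_of_le_ne_top ENNReal.one_ne_top hle
  have hsmall : (kiter P N x L).toReal ≤ (1/4 : ℝ) := by
    have hRne : R ≠ 0 := by
      rw [hR_def]
      exact Nat.cast_ne_zero.mpr (by omega)
    have h1 : (kiter P N x L).toReal ≤ ((N : ℝ≥0∞) / R).toReal := by
      refine ENNReal.toReal_mono ?_ hdesc
      exact (ENNReal.div_lt_top (ENNReal.natCast_ne_top _) hRne).ne
    have hRt : R.toReal = ((4 * (N + 1) : ℕ) : ℝ) := by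
      rw [hR_def, ENNReal.toReal_natCast]
    have h2 : ((N : ℝ≥0∞) / R).toReal = (N : ℝ) / (4 * (N + 1) : ℕ) := by
      rw [ENNReal.toReal_div, hRt]; simp
    have h3 : (N : ℝ) / (4 * (N + 1) : ℕ) ≤ 1/4 := by
      rw [div_le_div_iff₀ (by positivity) (by norm_num)]
      push_cast
      nlinarith [Nat.cast_nonneg (α := ℝ) N]
    calc (kiter P N x L).toReal ≤ ((N : ℝ≥0∞) / R).toReal := h1
      _ = (N : ℝ) / (4 * (N + 1) : ℕ) := h2
      _ ≤ 1/4 := h3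
  have habs := hN' x L hL_meas
  rw [abs_le] at habs
  linarith [habs.1, habs.2]
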